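/- Let Γ be a finitely generated subgroup of the multiplicative group ℂˣ of nonzero complex numbers. Then Γ is discrete in the topology induced from ℂ if and only if either Γ is finite, or there exist an integer N ≥ 1 and q ∈ ℂˣ with |q| ≠ 1 such that the map (ζ, m) ↦ ζ·q^m is a group isomorphism from μ_N × ℤ onto Γ, where μ_N = {ζ ∈ ℂˣ : ζ^N = 1}. -/

import Mathlib

open Complex

noncomputable def Complex.abs : AbsoluteValue ℂ ℝ where
  toFun := fun z => ‖z‖
  map_mul' := norm_mul
  nonneg' := norm_nonneg
  eq_zero' := fun _ => norm_eq_zero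
  add_le' := norm_add_le

@[simp] lemma Complex.abs_apply (z : ℂ) : Complex.abs z = ‖z‖ := rfl

lemma Complex.continuous_abs : Continuous Complex.abs := continuous_norm

private lemma absζ {N : ℕ} (hN : N ≠ 0) (ζ : ℂˣ) (h : ζ ^ N = 1) :
    Complex.abs (ζ : ℂ) = 1 := by
  have h0 : (0:ℝ) < Complex.abs (ζ : ℂ) := AbsoluteValue.pos _ (Units.ne_zero ζ)
  have hp : (Complex.abs (ζ : ℂ)) ^ N = 1 := by
    rw [← map_pow, ← Units.val_pow_eq_pow_val, h, Units.val_one, map_one]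
  rcases lt_trichotomy (Complex.abs (ζ : ℂ)) 1 with hlt | he | hgt
  · have := pow_lt_one₀ h0.le hlt hN
    rw [hp] at this; exact absurd this (lt_irrefl _)
  · exact he
  · have := one_lt_pow₀ hgt hN
    rw [hp] at this; exact absurd this (lt_irrefl _)

private lemma key' {r : ℝ} (h1 : 1 < r) {k : ℤ} (hk : k ≠ 0) :
    1 - r⁻¹ ≤ |r ^ k - 1| := by
  have hr0 : (0:ℝ) < r := lt_trans one_pos h1
  have hinv : r⁻¹ < 1 := inv_lt_one_of_one_lt₀ h1
  rcases lt_or_gt_of_ne hk with hneg | hpos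
  · have h2 : r ^ k ≤ r ^ (-1 : ℤ) := zpow_le_zpow_right₀ h1.le (by omega)
    rw [zpow_neg_one] at h2
    have h3 : (0:ℝ) < r ^ k := zpow_pos hr0 k
    rw [abs_of_nonpos (by linarith)]
    linarith
  · have h2 : r ^ (1 : ℤ) ≤ r ^ k := zpow_le_zpow_right₀ h1.le (by omega)
    rw [zpow_one] at h2
    have hmul : r * r⁻¹ = 1 := mul_inv_cancel₀ (ne_of_gt hr0)
    rw [_root_.abs_of_nonneg (by linarith)]
    nlinarith [sq_nonneg (r - 1), inv_pos.mpr hr0]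

private lemma key2 {r : ℝ} (hr0 : 0 < r) (hr1 : r ≠ 1) {k : ℤ} (hk : k ≠ 0) :
    1 - (max r r⁻¹)⁻¹ ≤ |r ^ k - 1| := by
  rcases lt_or_gt_of_ne hr1 with hlt | hgt
  · have hinv : 1 < r⁻¹ := (one_lt_inv₀ hr0).mpr hlt
    have hmax : max r r⁻¹ = r⁻¹ := max_eq_right (by linarith)
    have := key' hinv (k := -k) (by omega)
    rw [zpow_neg, inv_zpow, inv_inv, inv_inv] at this
    rwa [hmax, inv_inv]
  · have hmax : max r r⁻¹ = r := max_eq_left (by linarith [inv_lt_one_of_one_lt₀ hgt])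
    rw [hmax]
    exact key' hgt hk

private lemma sep (Γ : Subgroup ℂˣ)
    (H : ∀ z ∈ ((fun γ : ℂˣ => (γ : ℂ)) '' (Γ : Set ℂˣ)),
        ∃ U ∈ nhds z, U ∩ ((fun γ : ℂˣ => (γ : ℂ)) '' (Γ : Set ℂˣ)) = {z}) :
    ∀ z₀ : ℂ, z₀ ≠ 0 → ∃ δ > 0, ∀ γ₁ ∈ Γ, ∀ γ₂ ∈ Γ,
      Complex.abs ((γ₁:ℂ) - z₀) < δ → Complex.abs ((γ₂:ℂ) - z₀) < δ → γ₁ = γ₂ := by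
  obtain ⟨U, hU, hUS⟩ := H 1 ⟨1, Γ.one_mem, Units.val_one⟩
  obtain ⟨ε, hε, hball⟩ := Metric.mem_nhds_iff.mp hU
  have iso : ∀ γ ∈ Γ, Complex.abs ((γ:ℂ) - 1) < ε → γ = 1 := by
    intro γ hγ hlt
    have hmem : (γ:ℂ) ∈ U ∩ ((fun γ : ℂˣ => (γ : ℂ)) '' (Γ : Set ℂˣ)) :=
      ⟨hball (by simpa [Metric.mem_ball, Complex.dist_eq] using hlt), ⟨γ, hγ, rfl⟩⟩
    rw [hUS] at hmem
    exact Units.ext hmem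
  intro z₀ hz₀
  set a := Complex.abs z₀ with ha
  have ha0 : 0 < a := AbsoluteValue.pos _ hz₀
  refine ⟨min (a / 2) (ε * a / 4), by positivity, fun γ₁ hγ₁ γ₂ hγ₂ h1 h2 => ?_⟩
  set δ := min (a / 2) (ε * a / 4) with hδ
  have hδa : δ ≤ a / 2 := min_le_left _ _
  have hδε : δ ≤ ε * a / 4 := min_le_right _ _
  have hγ₂big : a / 2 ≤ Complex.abs (γ₂:ℂ) := by
    have := Complex.abs.le_sub z₀ (γ₂:ℂ)
    have h2' : Complex.abs (z₀ - (γ₂:ℂ)) < δ := by rwa [← AbsoluteValue.map_sub]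
    linarith
  have hdiff : Complex.abs ((γ₁:ℂ) - (γ₂:ℂ)) < 2 * δ := by
    have := Complex.abs.sub_le (γ₁:ℂ) z₀ (γ₂:ℂ)
    have h2' : Complex.abs (z₀ - (γ₂:ℂ)) < δ := by rwa [← AbsoluteValue.map_sub]
    linarith
  have hq : γ₁ * γ₂⁻¹ = 1 := by
    apply iso _ (Γ.mul_mem hγ₁ (Γ.inv_mem hγ₂))
    have hcoe : ((γ₁ * γ₂⁻¹ : ℂˣ) : ℂ) - 1 = ((γ₁:ℂ) - (γ₂:ℂ)) * ((γ₂:ℂ))⁻¹ := by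
      push_cast
      field_simp
    rw [hcoe, map_mul, map_inv₀]
    have h2pos : 0 < Complex.abs (γ₂:ℂ) := AbsoluteValue.pos _ (Units.ne_zero γ₂)
    rw [mul_inv_lt_iff₀ h2pos]
    calc Complex.abs ((γ₁:ℂ) - (γ₂:ℂ)) < 2 * δ := hdiff
      _ ≤ 2 * (ε * a / 4) := by linarith
      _ = ε * (a / 2) := by ring
      _ ≤ ε * Complex.abs (γ₂:ℂ) := by
          exact mul_le_mul_of_nonneg_left hγ₂big hε.le
  exact mul_inv_eq_one.mp hq

private lemma finite_in_compact (Γ : Subgroup ℂˣ)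
    (H : ∀ z ∈ ((fun γ : ℂˣ => (γ : ℂ)) '' (Γ : Set ℂˣ)),
        ∃ U ∈ nhds z, U ∩ ((fun γ : ℂˣ => (γ : ℂ)) '' (Γ : Set ℂˣ)) = {z})
    {K : Set ℂ} (hK : IsCompact K) (h0 : (0:ℂ) ∉ K) :
    {γ : ℂˣ | γ ∈ Γ ∧ (γ:ℂ) ∈ K}.Finite := by
  by_contra hinf
  rw [← Set.not_infinite, not_not] at hinf
  have hinj : Set.InjOn (fun γ : ℂˣ => (γ:ℂ)) {γ : ℂˣ | γ ∈ Γ ∧ (γ:ℂ) ∈ K} :=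
    fun a _ b _ h => Units.ext h
  have hinf' : Set.Infinite ((fun γ : ℂˣ => (γ:ℂ)) '' {γ : ℂˣ | γ ∈ Γ ∧ (γ:ℂ) ∈ K}) :=
    hinf.image hinj
  have hsub : (fun γ : ℂˣ => (γ:ℂ)) '' {γ : ℂˣ | γ ∈ Γ ∧ (γ:ℂ) ∈ K} ⊆ K := by
    rintro w ⟨γ, hγ, rfl⟩; exact hγ.2
  obtain ⟨x, hxK, hacc⟩ := hinf'.exists_accPt_of_subset_isCompact hK hsub
  have hx0 : x ≠ 0 := fun h => h0 (h ▸ hxK)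
  obtain ⟨δ, hδ, hsep⟩ := sep Γ H x hx0
  rw [accPt_iff_nhds] at hacc
  obtain ⟨y₁, ⟨hy₁b, γ₁, hγ₁, rfl⟩, hy₁ne⟩ := hacc (Metric.ball x δ) (Metric.ball_mem_nhds x hδ)
  have hd1 : 0 < dist (γ₁:ℂ) x := dist_pos.mpr hy₁ne
  obtain ⟨y₂, ⟨hy₂b, γ₂, hγ₂, rfl⟩, hy₂ne⟩ :=
    hacc (Metric.ball x (min δ (dist (γ₁:ℂ) x)))
      (Metric.ball_mem_nhds x (lt_min hδ hd1))
  rw [Metric.mem_ball] at hy₁b hy₂b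
  have hy₂δ : dist (γ₂:ℂ) x < δ := lt_of_lt_of_le hy₂b (min_le_left _ _)
  have hne : γ₂ ≠ γ₁ := by
    intro h
    rw [h] at hy₂b
    exact absurd (lt_of_lt_of_le hy₂b (min_le_right _ _)) (lt_irrefl _)
  apply hne
  exact hsep γ₂ hγ₂.1 γ₁ hγ₁.1
    (by rwa [Complex.dist_eq] at hy₂δ) (by rwa [Complex.dist_eq] at hy₁b)

private lemma forward (Γ : Subgroup ℂˣ)
    (H : ∀ z ∈ ((fun γ : ℂˣ => (γ : ℂ)) '' (Γ : Set ℂˣ)),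
        ∃ U ∈ nhds z, U ∩ ((fun γ : ℂˣ => (γ : ℂ)) '' (Γ : Set ℂˣ)) = {z}) :
    (Γ : Set ℂˣ).Finite ∨
      ∃ N : ℕ, 1 ≤ N ∧ ∃ q : ℂˣ, Complex.abs (q : ℂ) ≠ 1 ∧
        Function.Injective
          (fun p : {ζ : ℂˣ // ζ ^ N = 1} × ℤ => (p.1 : ℂˣ) * q ^ p.2) ∧
        Set.range
          (fun p : {ζ : ℂˣ // ζ ^ N = 1} × ℤ => (p.1 : ℂˣ) * q ^ p.2) =
          (Γ : Set ℂˣ) := by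
  have habs0 : ∀ γ : ℂˣ, (0:ℝ) < Complex.abs (γ:ℂ) :=
    fun γ => AbsoluteValue.pos _ (Units.ne_zero γ)
  -- the compact annulus
  set K : Set ℂ := {z : ℂ | Complex.abs z ∈ Set.Icc (2⁻¹ : ℝ) 2} with hKdef
  have hKcpt : IsCompact K := by
    apply Metric.isCompact_of_isClosed_isBounded
    · exact isClosed_Icc.preimage Complex.continuous_abs
    · refine Bornology.IsBounded.subset (Metric.isBounded_closedBall (x := (0:ℂ)) (r := 2)) ?_
      intro z hz
      rw [Metric.mem_closedBall, Complex.dist_eq, sub_zero]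
      exact hz.2
  have h0K : (0:ℂ) ∉ K := by
    simp only [hKdef, Set.mem_setOf_eq, map_zero, Set.mem_Icc]
    intro h
    norm_num at h
  have hT : {γ : ℂˣ | γ ∈ Γ ∧ (γ:ℂ) ∈ K}.Finite := finite_in_compact Γ H hKcpt h0K
  -- the additive subgroup of logs of absolute values
  set L : AddSubgroup ℝ :=
    { carrier := (fun γ : ℂˣ => Real.log (Complex.abs (γ:ℂ))) '' (Γ : Set ℂˣ)
      zero_mem' := ⟨1, Γ.one_mem, by simp⟩
      add_mem' := by
        rintro x y ⟨γ, hγ, rfl⟩ ⟨γ', hγ', rfl⟩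
        refine ⟨γ * γ', Γ.mul_mem hγ hγ', ?_⟩
        push_cast
        rw [map_mul, Real.log_mul (habs0 γ).ne' (habs0 γ').ne']
      neg_mem' := by
        rintro x ⟨γ, hγ, rfl⟩
        refine ⟨γ⁻¹, Γ.inv_mem hγ, ?_⟩
        show Real.log (Complex.abs ((γ⁻¹ : ℂˣ) : ℂ)) = -Real.log (Complex.abs ((γ : ℂ)))
        rw [Units.val_inv_eq_inv_val, map_inv₀, Real.log_inv] } with hLdef
  -- the gap
  have hlog2 : (0:ℝ) < Real.log 2 := Real.log_pos (by norm_num)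
  set V : Set ℝ := (fun γ : ℂˣ => |Real.log (Complex.abs (γ:ℂ))|) ''
      {γ : ℂˣ | (γ ∈ Γ ∧ (γ:ℂ) ∈ K) ∧ Complex.abs (γ:ℂ) ≠ 1} with hVdef
  have hVfin : (insert (Real.log 2) V).Finite :=
    Set.Finite.insert _ ((hT.subset (fun γ h => h.1)).image _)
  obtain ⟨c, hcW, hcmin⟩ := Set.exists_min_image _ id hVfin ⟨Real.log 2, Set.mem_insert _ _⟩
  have hVpos : ∀ x ∈ insert (Real.log 2) V, 0 < x := by
    rintro x (rfl | ⟨γ, ⟨_, hne⟩, rfl⟩)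
    · exact hlog2
    · exact abs_pos.mpr (Real.log_ne_zero_of_pos_of_ne_one (habs0 γ) hne)
  have hc0 : 0 < c := hVpos c hcW
  have hc2 : c ≤ Real.log 2 := hcmin _ (Set.mem_insert _ _)
  have gap : ∀ γ ∈ Γ, |Real.log (Complex.abs (γ:ℂ))| < c → Complex.abs (γ:ℂ) = 1 := by
    intro γ hγ hlt
    by_contra hne
    have hbound : |Real.log (Complex.abs (γ:ℂ))| < Real.log 2 := lt_of_lt_of_le hlt hc2
    rw [abs_lt] at hbound
    have hK1 : (γ:ℂ) ∈ K := by
      constructor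
      · have := Real.exp_le_exp.mpr hbound.1.le
        rwa [Real.exp_log (habs0 γ), ← Real.log_inv,
          Real.exp_log (by norm_num : (0:ℝ) < 2⁻¹)] at this
      · have := Real.exp_le_exp.mpr hbound.2.le
        rwa [Real.exp_log (habs0 γ), Real.exp_log (by norm_num : (0:ℝ) < 2)] at this
    have : |Real.log (Complex.abs (γ:ℂ))| ∈ V := ⟨γ, ⟨⟨hγ, hK1⟩, hne⟩, rfl⟩
    exact absurd hlt (not_lt.mpr (hcmin _ (Set.mem_insert_of_mem _ this)))
  -- L is not dense
  rcases AddSubgroup.dense_or_cyclic L with hdense | ⟨a, hLa⟩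
  · exfalso
    obtain ⟨x, hxL, hx0, hxc⟩ : ∃ x ∈ L, 0 < x ∧ x < c := by
      obtain ⟨x, hxL, hxI⟩ := hdense.exists_mem_open isOpen_Ioo
        (Set.nonempty_Ioo.mpr hc0)
      exact ⟨x, hxL, hxI.1, hxI.2⟩
    obtain ⟨γ, hγ, hxeq⟩ := hxL
    have hlogγ : Real.log (Complex.abs (γ:ℂ)) = x := hxeq
    have h1 : Complex.abs (γ:ℂ) = 1 := by
      apply gap γ hγ
      rw [hlogγ, _root_.abs_of_pos hx0]
      exact hxc
    rw [h1, Real.log_one] at hlogγ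
    linarith
  -- cyclic case
  by_cases hall : ∀ γ ∈ Γ, Complex.abs (γ:ℂ) = 1
  · left
    apply hT.subset
    intro γ hγ
    refine ⟨hγ, ?_⟩
    show Complex.abs (γ:ℂ) ∈ Set.Icc (2⁻¹:ℝ) 2
    rw [hall γ hγ]
    constructor <;> norm_num
  right
  push_neg at hall
  obtain ⟨γ₀, hγ₀, hγ₀ne⟩ := hall
  have hγ₀L : Real.log (Complex.abs (γ₀:ℂ)) ∈ L := ⟨γ₀, hγ₀, rfl⟩
  have hγ₀log : Real.log (Complex.abs (γ₀:ℂ)) ≠ 0 :=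
    Real.log_ne_zero_of_pos_of_ne_one (habs0 γ₀) hγ₀ne
  have ha0 : a ≠ 0 := by
    rintro rfl
    rw [hLa, AddSubgroup.mem_closure_singleton] at hγ₀L
    obtain ⟨n, hn⟩ := hγ₀L
    rw [smul_zero] at hn
    exact hγ₀log hn.symm
  have haL : a ∈ L := by
    rw [hLa]
    exact AddSubgroup.subset_closure rfl
  obtain ⟨q, hqΓ, hqa'⟩ := haL
  have hqa : Real.log (Complex.abs (q:ℂ)) = a := hqa'
  have hrq : Complex.abs (q:ℂ) ≠ 1 := by
    intro h
    rw [h, Real.log_one] at hqa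
    exact ha0 hqa.symm
  -- the subgroup of elements of absolute value 1
  set Γ₀ : Subgroup ℂˣ :=
    { carrier := {γ : ℂˣ | γ ∈ Γ ∧ Complex.abs (γ:ℂ) = 1}
      one_mem' := ⟨Γ.one_mem, by simp⟩
      mul_mem' := by
        rintro γ γ' ⟨hγ, h1⟩ ⟨hγ', h1'⟩
        refine ⟨Γ.mul_mem hγ hγ', ?_⟩
        push_cast
        rw [map_mul, h1, h1', one_mul]
      inv_mem' := by
        rintro γ ⟨hγ, h1⟩
        refine ⟨Γ.inv_mem hγ, ?_⟩
        show Complex.abs ((γ⁻¹ : ℂˣ) : ℂ) = 1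
        rw [Units.val_inv_eq_inv_val, map_inv₀, h1, inv_one] } with hΓ₀def
  have hΓ₀fin : (Γ₀ : Set ℂˣ).Finite := by
    apply hT.subset
    rintro γ ⟨hγ, h1⟩
    refine ⟨hγ, ?_⟩
    show Complex.abs (γ:ℂ) ∈ Set.Icc (2⁻¹:ℝ) 2
    rw [h1]
    constructor <;> norm_num
  have : Finite ↥Γ₀ := hΓ₀fin.to_subtype
  set N : ℕ := Nat.card ↥Γ₀ with hNdef
  have hN1 : 1 ≤ N := Nat.one_le_iff_ne_zero.mpr (Nat.card_ne_zero.mpr ⟨⟨1, Γ₀.one_mem⟩, this⟩)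
  have hNne : N ≠ 0 := by omega
  have hpow : ∀ γ : ℂˣ, γ ∈ Γ₀ → γ ^ N = 1 := by
    intro γ hγ
    have h := pow_card_eq_one' (G := ↥Γ₀) (x := ⟨γ, hγ⟩)
    have h2 := Subtype.ext_iff.mp h
    rw [SubmonoidClass.coe_pow] at h2
    exact h2
  -- Γ₀ equals the group of N-th roots of unity
  haveI : NeZero N := ⟨hNne⟩
  have hprim : IsPrimitiveRoot (Complex.exp (2 * Real.pi * Complex.I / N)) N :=
    Complex.isPrimitiveRoot_exp N hNne
  have hcardR : Nat.card ↥(rootsOfUnity N ℂ) = N := by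
    exact hprim.card_rootsOfUnity
  have hsubset : (Γ₀ : Set ℂˣ) ⊆ (rootsOfUnity N ℂ : Set ℂˣ) := by
    intro γ hγ
    rw [SetLike.mem_coe, _root_.mem_rootsOfUnity]
    exact hpow γ hγ
  haveI hfinR : Finite ↥(rootsOfUnity N ℂ : Set ℂˣ) :=
    inferInstanceAs (Finite ↥(rootsOfUnity N ℂ))
  have hμeq : (Γ₀ : Set ℂˣ) = (rootsOfUnity N ℂ : Set ℂˣ) := by
    apply Set.eq_of_subset_of_ncard_le hsubset ?_ (Set.toFinite _)
    have e1 : (rootsOfUnity N ℂ : Set ℂˣ).ncard = N := by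
      rw [← Nat.card_coe_set_eq]
      exact hcardR
    have e2 : (Γ₀ : Set ℂˣ).ncard = N := by
      rw [← Nat.card_coe_set_eq]
      rfl
    omega
  refine ⟨N, hN1, q, hrq, ?_, ?_⟩
  · rintro ⟨⟨ζ₁, hζ₁⟩, m₁⟩ ⟨⟨ζ₂, hζ₂⟩, m₂⟩ h
    simp only at h
    have habs : ∀ (ζ : ℂˣ) (m : ℤ), ζ ^ N = 1 →
        Real.log (Complex.abs ((↑(ζ * q ^ m) : ℂ))) = (m : ℝ) * a := by
      intro ζ m hζ
      rw [Units.val_mul, map_mul, absζ hNne ζ hζ, one_mul,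
        Units.val_zpow_eq_zpow_val, map_zpow₀, Real.log_zpow, hqa]
    have h1 := habs ζ₁ m₁ hζ₁
    rw [h, habs ζ₂ m₂ hζ₂] at h1
    have hm : m₁ = m₂ := by exact_mod_cast (mul_right_cancel₀ ha0 h1).symm
    subst hm
    have hζeq : ζ₁ = ζ₂ := mul_right_cancel h
    simp [hζeq]
  · ext γ
    simp only [Set.mem_range, SetLike.mem_coe]
    constructor
    · rintro ⟨⟨⟨ζ, hζ⟩, m⟩, rfl⟩
      simp only
      have hζmem : ζ ∈ (Γ₀ : Set ℂˣ) := by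
        rw [hμeq, SetLike.mem_coe, _root_.mem_rootsOfUnity]
        exact hζ
      exact Γ.mul_mem hζmem.1 (Γ.zpow_mem hqΓ m)
    · intro hγ
      have hγL : Real.log (Complex.abs (γ:ℂ)) ∈ L := ⟨γ, hγ, rfl⟩
      rw [hLa, AddSubgroup.mem_closure_singleton] at hγL
      obtain ⟨m, hm⟩ := hγL
      set ζ : ℂˣ := γ * (q ^ m)⁻¹ with hζdef
      have hζΓ : ζ ∈ Γ := Γ.mul_mem hγ (Γ.inv_mem (Γ.zpow_mem hqΓ m))
      have habsζ : Complex.abs (ζ:ℂ) = 1 := by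
        have hlog : Real.log (Complex.abs (ζ:ℂ)) = 0 := by
          rw [hζdef, Units.val_mul, map_mul,
            Real.log_mul (habs0 γ).ne' (habs0 _).ne',
            Units.val_inv_eq_inv_val, map_inv₀, Real.log_inv,
            Units.val_zpow_eq_zpow_val, map_zpow₀, Real.log_zpow, hqa, ← hm,
            zsmul_eq_mul]
          ring
        rcases Real.log_eq_zero.mp hlog with h | h | h
        · exact absurd h (habs0 ζ).ne'
        · exact h
        · exfalso
          have := habs0 ζ
          rw [h] at this
          norm_num at this
      have hζmem : ζ ∈ (Γ₀ : Set ℂˣ) := ⟨hζΓ, habsζ⟩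
      rw [hμeq, SetLike.mem_coe, _root_.mem_rootsOfUnity] at hζmem
      refine ⟨⟨⟨ζ, hζmem⟩, m⟩, ?_⟩
      simp only [hζdef]
      exact inv_mul_cancel_right γ (q ^ m)

private lemma backward (Γ : Subgroup ℂˣ)
    (h : (Γ : Set ℂˣ).Finite ∨
      ∃ N : ℕ, 1 ≤ N ∧ ∃ q : ℂˣ, Complex.abs (q : ℂ) ≠ 1 ∧
        Function.Injective
          (fun p : {ζ : ℂˣ // ζ ^ N = 1} × ℤ => (p.1 : ℂˣ) * q ^ p.2) ∧
        Set.range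
          (fun p : {ζ : ℂˣ // ζ ^ N = 1} × ℤ => (p.1 : ℂˣ) * q ^ p.2) =
          (Γ : Set ℂˣ)) :
    ∀ z ∈ ((fun γ : ℂˣ => (γ : ℂ)) '' (Γ : Set ℂˣ)),
      ∃ U ∈ nhds z, U ∩ ((fun γ : ℂˣ => (γ : ℂ)) '' (Γ : Set ℂˣ)) = {z} := by
  rcases h with hfin | ⟨N, hN1, q, hq, _, hrange⟩
  · intro z hz
    have hSfin : ((fun γ : ℂˣ => (γ : ℂ)) '' (Γ : Set ℂˣ)).Finite := hfin.image _
    refine ⟨(((fun γ : ℂˣ => (γ : ℂ)) '' (Γ : Set ℂˣ)) \ {z})ᶜ, ?_, ?_⟩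
    · exact IsOpen.mem_nhds (hSfin.subset Set.diff_subset).isClosed.isOpen_compl
        (fun hmem => hmem.2 rfl)
    · ext w
      simp only [Set.mem_inter_iff, Set.mem_compl_iff, Set.mem_diff,
        Set.mem_singleton_iff]
      constructor
      · rintro ⟨hnot, hw⟩
        by_contra hne
        exact hnot ⟨hw, hne⟩
      · rintro rfl
        exact ⟨fun hmem => hmem.2 rfl, hz⟩
  · intro z hz
    obtain ⟨γ, hγ, rfl⟩ := hz
    have hNne : N ≠ 0 := by omega
    set r : ℝ := Complex.abs (q:ℂ) with hrdef
    have hr0 : 0 < r := AbsoluteValue.pos _ (Units.ne_zero q)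
    set ρ : ℝ := (max r r⁻¹)⁻¹ with hρdef
    have hmax1 : 1 < max r r⁻¹ := by
      rcases lt_or_gt_of_ne hq with hlt | hgt
      · exact lt_of_lt_of_le ((one_lt_inv₀ hr0).mpr hlt) (le_max_right _ _)
      · exact lt_of_lt_of_le hgt (le_max_left _ _)
    have hρ1 : ρ < 1 := inv_lt_one_of_one_lt₀ hmax1
    have hρ0 : 0 < ρ := inv_pos.mpr (lt_trans one_pos hmax1)
    have hγmem : γ ∈ Set.range
        (fun p : {ζ : ℂˣ // ζ ^ N = 1} × ℤ => (p.1 : ℂˣ) * q ^ p.2) := by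
      rw [hrange]; exact hγ
    obtain ⟨⟨⟨ζ, hζ⟩, m⟩, hp⟩ := hγmem
    simp only at hp
    have hcoe : ∀ (ζ' : ℂˣ) (m' : ℤ), ((ζ' * q ^ m' : ℂˣ) : ℂ) = (ζ':ℂ) * ((q:ℂ)) ^ m' := by
      intro ζ' m'
      rw [Units.val_mul, Units.val_zpow_eq_zpow_val]
    have habsγ : Complex.abs (γ:ℂ) = r ^ m := by
      rw [← hp, hcoe, map_mul, absζ hNne ζ hζ, one_mul, map_zpow₀]
    have hγ0 : (0:ℝ) < Complex.abs (γ:ℂ) := AbsoluteValue.pos _ (Units.ne_zero γ)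
    set δ : ℝ := Complex.abs (γ:ℂ) * (1 - ρ) with hδdef
    have hδ0 : 0 < δ := mul_pos hγ0 (by linarith)
    set F : Set ℂ := {w : ℂ | w ^ N = (γ:ℂ) ^ N} with hFdef
    have hFfin : F.Finite := by
      apply Set.Finite.subset (Polynomial.finite_setOf_isRoot
        (Polynomial.X_pow_sub_C_ne_zero (by omega : 0 < N) ((γ:ℂ) ^ N)))
      intro w hw
      simp only [Set.mem_setOf_eq, Polynomial.IsRoot, Polynomial.eval_sub,
        Polynomial.eval_pow, Polynomial.eval_X, Polynomial.eval_C, sub_eq_zero]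
      exact hw
    refine ⟨{w : ℂ | |Complex.abs w - Complex.abs (γ:ℂ)| < δ} \ (F \ {(γ:ℂ)}), ?_, ?_⟩
    · apply IsOpen.mem_nhds
      · apply IsOpen.sdiff
        · exact isOpen_lt ((Complex.continuous_abs.sub continuous_const).abs)
            continuous_const
        · exact (hFfin.subset Set.diff_subset).isClosed
      · exact ⟨by simp [hδ0], fun hmem => hmem.2 rfl⟩
    · ext w
      simp only [Set.mem_inter_iff, Set.mem_diff, Set.mem_setOf_eq,
        Set.mem_singleton_iff, Set.mem_image]
      constructor
      · rintro ⟨⟨hball, hnF⟩, γ', hγ', rfl⟩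
        have hγ'mem : γ' ∈ Set.range
            (fun p : {ζ : ℂˣ // ζ ^ N = 1} × ℤ => (p.1 : ℂˣ) * q ^ p.2) := by
          rw [hrange]; exact hγ'
        obtain ⟨⟨⟨ζ', hζ'⟩, m'⟩, hp'⟩ := hγ'mem
        simp only at hp'
        have habs' : Complex.abs ((γ':ℂ)) = r ^ m' := by
          rw [← hp', hcoe, map_mul, absζ hNne ζ' hζ', one_mul, map_zpow₀]
        have hmm : m' = m := by
          by_contra hne
          have hk : m' - m ≠ 0 := sub_ne_zero.mpr hne
          have key := key2 hr0 hq hk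
          have heq : |r ^ m' - r ^ m| = r ^ m * |r ^ (m' - m) - 1| := by
            have h1 : r ^ m' - r ^ m = r ^ m * (r ^ (m' - m) - 1) := by
              rw [mul_sub, mul_one, ← zpow_add₀ hr0.ne']
              congr 2
              omega
            rw [h1, abs_mul, _root_.abs_of_pos (zpow_pos hr0 m)]
          have hge : r ^ m * (1 - ρ) ≤ |r ^ m' - r ^ m| := by
            rw [heq]
            exact mul_le_mul_of_nonneg_left key (zpow_pos hr0 m).le
          rw [habs', habsγ] at hball
          rw [hδdef, habsγ] at hball
          linarith
        subst hmm
        have hwN : ((γ':ℂ)) ^ N = (γ:ℂ) ^ N := by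
          have e1 : ((γ':ℂ)) ^ N = (((q:ℂ)) ^ m') ^ N := by
            rw [← hp', hcoe, mul_pow]
            have : ((ζ':ℂ)) ^ N = 1 := by
              rw [← Units.val_pow_eq_pow_val, hζ', Units.val_one]
            rw [this, one_mul]
          have e2 : ((γ:ℂ)) ^ N = (((q:ℂ)) ^ m') ^ N := by
            rw [← hp, hcoe, mul_pow]
            have : ((ζ:ℂ)) ^ N = 1 := by
              rw [← Units.val_pow_eq_pow_val, hζ, Units.val_one]
            rw [this, one_mul]
          rw [e1, e2]
        by_contra hne
        exact hnF ⟨hwN, hne⟩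
      · rintro rfl
        exact ⟨⟨by simp [hδ0], fun hmem => hmem.2 rfl⟩, γ, hγ, rfl⟩

/-- a finitely generated subgroup of `ℂˣ` is discrete (in the topology induced
from `ℂ`) iff it is finite or of the form `μ_N × qᶻ` with `|q| ≠ 1`, via `(ζ, m) ↦ ζ·q^m`. -/
theorem stmt_6 (Γ : Subgroup ℂˣ) (hfg : Γ.FG) :
    (∀ z ∈ ((fun γ : ℂˣ => (γ : ℂ)) '' (Γ : Set ℂˣ)),
        ∃ U ∈ nhds z, U ∩ ((fun γ : ℂˣ => (γ : ℂ)) '' (Γ : Set ℂˣ)) = {z}) ↔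
      ((Γ : Set ℂˣ).Finite ∨
        ∃ N : ℕ, 1 ≤ N ∧ ∃ q : ℂˣ, ‖(q : ℂ)‖ ≠ 1 ∧
          Function.Injective
            (fun p : {ζ : ℂˣ // ζ ^ N = 1} × ℤ => (p.1 : ℂˣ) * q ^ p.2) ∧
          Set.range
            (fun p : {ζ : ℂˣ // ζ ^ N = 1} × ℤ => (p.1 : ℂˣ) * q ^ p.2) =
            (Γ : Set ℂˣ)) := by
  exact ⟨forward Γ, backward Γ⟩
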